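/- Every stratified propositional logic program containing no strong constraints has at least one stable model. -/

import Mathlib

/-- A propositional logic-program rule `head :- pos, not neg`.
`head = none` represents a strong constraint (rule with empty head). -/
structure LPRule where
  head : Option ℕ
  pos : Finset ℕ
  neg : Finset ℕ
deriving DecidableEq

namespace LP

/-- Truth of a rule head w.r.t. an interpretation; an empty head is never true. -/
def headTrue (I : Set ℕ) : Option ℕ → Prop
  | none => False
  | some a => a ∈ I

/-- The body of a rule is true w.r.t. `I`. -/
def bodyTrue (I : Set ℕ) (r : LPRule) : Prop :=
  (∀ b ∈ r.pos, b ∈ I) ∧ (∀ b ∈ r.neg, b ∉ I)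

/-- `I` satisfies rule `r`. -/
def satRule (I : Set ℕ) (r : LPRule) : Prop := bodyTrue I r → headTrue I r.head

/-- `I` is a model of the program `P`. -/
def isModel (P : Set LPRule) (I : Set ℕ) : Prop := ∀ r ∈ P, satRule I r

/-- A positive (negation-free) program. -/
def isPositive (P : Set LPRule) : Prop := ∀ r ∈ P, r.neg = ∅

/-- A constraint-free program (no rules with empty head). -/
def constraintFree (P : Set LPRule) : Prop := ∀ r ∈ P, r.head ≠ none

/-- The Gelfond-Lifschitz reduct `P^I`. -/
def reduct (P : Set LPRule) (I : Set ℕ) : Set LPRule :=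
  (fun r => LPRule.mk r.head r.pos ∅) '' {r ∈ P | ∀ b ∈ r.neg, b ∉ I}

/-- `M` is the least model of `P`. -/
def isLeastModel (P : Set LPRule) (M : Set ℕ) : Prop :=
  isModel P M ∧ ∀ M', isModel P M' → M ⊆ M'

/-- `M` is a stable model of `P`: it is the least model of the reduct `P^M`. -/
def isStable (P : Set LPRule) (M : Set ℕ) : Prop := isLeastModel (reduct P M) M

/-- `facts S` is the set of facts `{p :- | p ∈ S}`. -/
def facts (S : Set ℕ) : Set LPRule := (fun p => LPRule.mk (some p) ∅ ∅) '' S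

/-- The atoms occurring in a rule. -/
def ruleAtoms (r : LPRule) : Set ℕ := {a | r.head = some a} ∪ ↑r.pos ∪ ↑r.neg

/-- The Herbrand base of a program: all atoms occurring in it. -/
def atoms (P : Set LPRule) : Set ℕ := ⋃ r ∈ P, ruleAtoms r

/-- `p` depends on `q`: some rule has head `p` and `q` in its body. -/
def dependsOn (P : Set LPRule) (p q : ℕ) : Prop :=
  ∃ r ∈ P, r.head = some p ∧ (q ∈ r.pos ∨ q ∈ r.neg)

/-- `P` is stratified: no rule with head `p` and `not q` in the body where
`q` transitively depends on `p`. -/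
def stratified (P : Set LPRule) : Prop :=
  ∀ r ∈ P, ∀ p, r.head = some p → ∀ q ∈ r.neg, ¬ Relation.TransGen (dependsOn P) q p

/-- Hypotheses `H` do not occur in rule heads of `P`. -/
def hypFree (P : Set LPRule) (H : Finset ℕ) : Prop :=
  ∀ r ∈ P, ∀ h ∈ H, r.head ≠ some h

/-- `S` is an admissible solution: `S ⊆ H` and some stable model of
`P ∪ facts S` makes all observations true. -/
def admissible (P : Set LPRule) (H obsP obsN : Finset ℕ) (S : Set ℕ) : Prop :=
  S ⊆ ↑H ∧ ∃ M, isStable (P ∪ facts S) M ∧ (∀ o ∈ obsP, o ∈ M) ∧ (∀ o ∈ obsN, o ∉ M)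

/-- `sum_γ`: total penalty of the hypotheses of `H` belonging to `S`. -/
noncomputable def cost (γ : ℕ → NNReal) (H : Finset ℕ) (S : Set ℕ) : NNReal :=
  ∑ h ∈ H, S.indicator γ h

/-- `S` is an optimal solution: admissible with minimal total penalty. -/
def optimal (P : Set LPRule) (H obsP obsN : Finset ℕ) (γ : ℕ → NNReal) (S : Set ℕ) : Prop :=
  admissible P H obsP obsN S ∧
  ∀ S', admissible P H obsP obsN S' → cost γ H S ≤ cost γ H S'

end LP

namespace StratAux
open LP Relation

/-- Head atoms of a program. -/
def heads (P : Set LPRule) : Set ℕ := {a | ∃ r ∈ P, r.head = some a}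

/-- Candidate least model: intersection of all models. -/
def lm (P : Set LPRule) : Set ℕ := {a | ∀ I, isModel P I → a ∈ I}

/-- Atoms occurring negatively. -/
def negAtoms (P : Set LPRule) : Set ℕ := ⋃ r ∈ P, ↑r.neg

lemma negAtoms_finite {P : Set LPRule} (h : P.Finite) : (negAtoms P).Finite :=
  Set.Finite.biUnion h (fun r _ => r.neg.finite_toSet)

lemma mem_negAtoms {P : Set LPRule} {a : ℕ} :
    a ∈ negAtoms P ↔ ∃ r ∈ P, a ∈ r.neg := by
  simp [negAtoms]

lemma mem_reduct {P : Set LPRule} {I : Set ℕ} {r' : LPRule} :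
    r' ∈ reduct P I ↔ ∃ r ∈ P, (∀ b ∈ r.neg, b ∉ I) ∧ r' = ⟨r.head, r.pos, ∅⟩ := by
  constructor
  · rintro ⟨r, ⟨hrP, hneg⟩, rfl⟩; exact ⟨r, hrP, hneg, rfl⟩
  · rintro ⟨r, hrP, hneg, rfl⟩; exact ⟨r, ⟨hrP, hneg⟩, rfl⟩

lemma model_heads {P : Set LPRule} (hCF : constraintFree P) : isModel P (heads P) := by
  intro r hr _hb
  obtain ⟨a, ha⟩ := Option.ne_none_iff_exists'.mp (hCF r hr)
  rw [ha]; exact ⟨r, hr, ha⟩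

lemma lm_subset {P : Set LPRule} {I : Set ℕ} (hI : isModel P I) : lm P ⊆ I :=
  fun _ ha => ha I hI

lemma lm_model {P : Set LPRule} (hpos : isPositive P) (hCF : constraintFree P) :
    isModel P (lm P) := by
  intro r hr hb
  obtain ⟨a, ha⟩ := Option.ne_none_iff_exists'.mp (hCF r hr)
  rw [ha]
  intro I hI
  have hb' : bodyTrue I r := by
    refine ⟨fun b hbp => hb.1 b hbp I hI, ?_⟩
    rw [hpos r hr]; simp
  have := hI r hr hb'
  rwa [ha] at this

lemma self_eq_mk {r : LPRule} (h : r.neg = ∅) : r = ⟨r.head, r.pos, ∅⟩ := by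
  obtain ⟨h1, p1, n1⟩ := r
  simp_all

lemma reduct_positive {P : Set LPRule} (hpos : isPositive P) (I : Set ℕ) :
    reduct P I = P := by
  ext r
  rw [mem_reduct]
  constructor
  · rintro ⟨s, hs, _, rfl⟩
    rwa [← self_eq_mk (hpos s hs)]
  · intro hr
    exact ⟨r, hr, by rw [hpos r hr]; simp, self_eq_mk (hpos r hr)⟩

lemma stable_positive {P : Set LPRule} (hpos : isPositive P) (hCF : constraintFree P) :
    isStable P (lm P) := by
  rw [isStable, isLeastModel, reduct_positive hpos]
  exact ⟨lm_model hpos hCF, fun I hI => lm_subset hI⟩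

lemma reduct_cf {P : Set LPRule} {I : Set ℕ} (hCF : constraintFree P) :
    constraintFree (reduct P I) := by
  intro r' hr'
  rw [mem_reduct] at hr'
  obtain ⟨r, hr, _, rfl⟩ := hr'
  exact hCF r hr

lemma stable_subset_heads {P : Set LPRule} {M : Set ℕ} (hCF : constraintFree P)
    (h : isStable P M) : M ⊆ heads P := by
  intro a ha
  have h2 := h.2 (heads (reduct P M)) (model_heads (reduct_cf hCF)) ha
  obtain ⟨r', hr', hh⟩ := h2
  rw [mem_reduct] at hr'
  obtain ⟨r, hrP, _, rfl⟩ := hr'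
  exact ⟨r, hrP, hh⟩

lemma positive_of_negAtoms_empty {P : Set LPRule} (h : negAtoms P = ∅) : isPositive P := by
  intro r hr
  rw [Finset.eq_empty_iff_forall_notMem]
  intro b hb
  have : b ∈ negAtoms P := mem_negAtoms.mpr ⟨r, hr, hb⟩
  simp [h] at this


lemma main_induction : ∀ n : ℕ, ∀ P : Set LPRule, P.Finite → stratified P →
    constraintFree P → (negAtoms P).ncard ≤ n → ∃ M, isStable P M := by
  intro n
  induction n with
  | zero =>
    intro P hFin _ hCF hle
    have hNA : negAtoms P = ∅ :=
      (Set.ncard_eq_zero (negAtoms_finite hFin)).mp (Nat.le_zero.mp hle)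
    exact ⟨lm P, stable_positive (positive_of_negAtoms_empty hNA) hCF⟩
  | succ n ih =>
    intro P hFin hStrat hCF hle
    classical
    by_cases hNA : negAtoms P = ∅
    · exact ⟨lm P, stable_positive (positive_of_negAtoms_empty hNA) hCF⟩
    have hNAfin : (negAtoms P).Finite := negAtoms_finite hFin
    have hNAne : (negAtoms P).Nonempty := Set.nonempty_iff_ne_empty.mpr hNA
    -- the "below through a negative edge" relation
    set Lt : ℕ → ℕ → Prop :=
      fun y x => ∃ r ∈ P, ∃ p, r.head = some p ∧ y ∈ r.neg ∧
        ReflTransGen (dependsOn P) x p with hLt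
    have hLt_irrefl : ∀ x, ¬ Lt x x := by
      rintro x ⟨r, hrP, p, hhead, hneg, hrtg⟩
      apply hStrat r hrP p hhead x hneg
      rcases Relation.reflTransGen_iff_eq_or_transGen.mp hrtg with heq | htg
      · subst heq
        exact TransGen.single ⟨r, hrP, hhead, Or.inr hneg⟩
      · exact htg
    have hLt_trans : ∀ z y x, Lt z y → Lt y x → Lt z x := by
      rintro z y x ⟨r1, h1, p1, hh1, hn1, hr1⟩ ⟨r2, h2, p2, hh2, hn2, hr2⟩
      refine ⟨r1, h1, p1, hh1, hn1, ?_⟩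
      exact ((hr2.tail ⟨r2, h2, hh2, Or.inr hn2⟩).trans hr1)
    have hLt_negAtoms : ∀ y x, Lt y x → y ∈ negAtoms P := by
      rintro y x ⟨r, hrP, p, _, hn, _⟩
      exact mem_negAtoms.mpr ⟨r, hrP, hn⟩
    -- choose a minimal negative atom q
    set Below : ℕ → Set ℕ := fun x => negAtoms P ∩ {y | Lt y x} with hBelow
    have hBelowFin : ∀ x, (Below x).Finite := fun x => hNAfin.subset Set.inter_subset_left
    obtain ⟨q, hqNA, hqmin⟩ :=
      Set.exists_min_image (negAtoms P) (fun x => (Below x).ncard) hNAfin hNAne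
    have hqlow : ∀ y, ¬ Lt y q := by
      intro y hy
      have hyNA : y ∈ negAtoms P := hLt_negAtoms y q hy
      have hss : Below y ⊂ Below q := by
        constructor
        · rintro z ⟨hz1, hz2⟩
          exact ⟨hz1, hLt_trans z y q hz2 hy⟩
        · intro hsub
          have : y ∈ Below y := hsub ⟨hyNA, hy⟩
          exact hLt_irrefl y this.2
      have := Set.ncard_lt_ncard hss (hBelowFin q)
      exact absurd (hqmin y hyNA) (by omega)
    -- the bottom atoms
    set U : Set ℕ := {b | ReflTransGen (dependsOn P) q b} with hU
    have hUq : q ∈ U := ReflTransGen.refl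
    have hUclosed : ∀ b ∈ U, ∀ c, dependsOn P b c → c ∈ U :=
      fun b hb c hbc => ReflTransGen.tail hb hbc
    have hUlow : ∀ r ∈ P, ∀ b, r.head = some b → b ∈ U → r.neg = ∅ := by
      intro r hrP b hh hbU
      rw [Finset.eq_empty_iff_forall_notMem]
      intro y hy
      exact hqlow y ⟨r, hrP, b, hh, hy, hbU⟩
    -- the bottom and top programs
    set B : Set LPRule := {r ∈ P | ∃ a ∈ U, r.head = some a} with hBdef
    set T : Set LPRule := {r ∈ P | ∀ a ∈ U, r.head ≠ some a} with hTdef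
    have hBpos : isPositive B := by
      rintro r ⟨hrP, a, haU, hh⟩
      exact hUlow r hrP a hh haU
    have hBcf : constraintFree B := fun r hr => hCF r hr.1
    have hBposSub : ∀ r ∈ B, ↑r.pos ⊆ U := by
      rintro r ⟨hrP, a, haU, hh⟩ c hc
      exact hUclosed a haU c ⟨r, hrP, hh, Or.inl hc⟩
    set X : Set ℕ := lm B with hX
    have hXU : X ⊆ U := by
      intro a ha
      have h1 : a ∈ heads B := lm_subset (model_heads hBcf) ha
      obtain ⟨r, hrB, hh⟩ := h1
      obtain ⟨hrP, a', ha'U, hh'⟩ := hrB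
      rw [hh] at hh'
      simpa [← Option.some_inj.mp hh'] using ha'U
    have hTheads : ∀ r ∈ T, ∀ a, r.head = some a → a ∉ U :=
      fun r hr a ha haU => hr.2 a haU ha
    -- partial evaluation of the top program
    set evalR : LPRule → LPRule :=
      fun r => ⟨r.head, r.pos.filter (fun b => b ∉ U), r.neg.filter (fun b => b ∉ U)⟩
      with hevalR
    set T' : Set LPRule :=
      evalR '' {r ∈ T | (∀ b ∈ r.pos, b ∈ U → b ∈ X) ∧ (∀ b ∈ r.neg, b ∈ U → b ∉ X)}
      with hT'
    have hsubP : {r ∈ T | (∀ b ∈ r.pos, b ∈ U → b ∈ X) ∧ (∀ b ∈ r.neg, b ∈ U → b ∉ X)} ⊆ P :=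
      fun r hr => hr.1.1
    have hT'fin : T'.Finite := (hFin.subset hsubP).image _
    have hT'cf : constraintFree T' := by
      rintro r' ⟨r, hrmem, rfl⟩
      exact hCF r (hsubP hrmem)
    have hT'dep : ∀ p c, dependsOn T' p c → dependsOn P p c := by
      rintro p c ⟨r', ⟨r, hrmem, rfl⟩, hh, hc⟩
      refine ⟨r, hsubP hrmem, hh, ?_⟩
      rcases hc with hc | hc
      · exact Or.inl (Finset.mem_filter.mp hc).1
      · exact Or.inr (Finset.mem_filter.mp hc).1
    have hT'strat : stratified T' := by
      rintro r' ⟨r, hrmem, rfl⟩ p hh y hy htg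
      have hy' : y ∈ r.neg := (Finset.mem_filter.mp hy).1
      exact hStrat r (hsubP hrmem) p hh y hy' (TransGen.mono hT'dep _ _ htg)
    have hqmem : q ∈ negAtoms P := hqNA
    have hNA' : negAtoms T' ⊆ negAtoms P \ {q} := by
      intro a ha
      obtain ⟨r', hr', haneg⟩ := mem_negAtoms.mp ha
      obtain ⟨r, hrmem, rfl⟩ := hr'
      have h1 := Finset.mem_filter.mp haneg
      refine ⟨mem_negAtoms.mpr ⟨r, hsubP hrmem, h1.1⟩, ?_⟩
      intro haq
      rw [Set.mem_singleton_iff] at haq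
      exact h1.2 (haq ▸ hUq)
    have hle' : (negAtoms T').ncard ≤ n := by
      have h1 : (negAtoms T').ncard ≤ (negAtoms P \ {q}).ncard :=
        Set.ncard_le_ncard hNA' hNAfin.diff
      have h2 : (negAtoms P \ {q}).ncard = (negAtoms P).ncard - 1 :=
        Set.ncard_diff_singleton_of_mem hqmem
      have h3 : 1 ≤ (negAtoms P).ncard :=
        Set.ncard_pos hNAfin |>.mpr hNAne
      omega
    obtain ⟨Y, hY⟩ := ih T' hT'fin hT'strat hT'cf hle'
    have hYU : ∀ a ∈ Y, a ∉ U := by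
      intro a ha haU
      obtain ⟨r', hr', hh⟩ := stable_subset_heads hT'cf hY ha
      obtain ⟨r, hrmem, rfl⟩ := hr'
      exact hTheads r hrmem.1 a hh haU
    set M : Set ℕ := X ∪ Y with hM
    have hMU : ∀ a, a ∈ M → a ∈ U → a ∈ X := by
      rintro a (h | h) hU'
      · exact h
      · exact absurd hU' (hYU a h)
    refine ⟨M, ?_, ?_⟩
    · -- M is a model of the reduct of P
      rintro r' hr' hb
      rw [mem_reduct] at hr'
      obtain ⟨r, hrP, hnegM, rfl⟩ := hr'
      obtain ⟨a, ha⟩ := Option.ne_none_iff_exists'.mp (hCF r hrP)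
      have hbpos : ∀ b ∈ r.pos, b ∈ M := hb.1
      by_cases haU : a ∈ U
      · have hrB : r ∈ B := ⟨hrP, a, haU, ha⟩
        have hposX : ∀ b ∈ r.pos, b ∈ X :=
          fun b hbp => hMU b (hbpos b hbp) (hBposSub r hrB hbp)
        have hbX : bodyTrue X r := ⟨hposX, by rw [hBpos r hrB]; simp⟩
        have := lm_model hBpos hBcf r hrB hbX
        rw [ha] at this ⊢
        exact Or.inl this
      · have hrT : r ∈ T := by
          refine ⟨hrP, fun a' ha'U hh' => ?_⟩
          rw [ha] at hh'
          exact haU (Option.some_inj.mp hh' ▸ ha'U)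
        have hC1 : ∀ b ∈ r.pos, b ∈ U → b ∈ X :=
          fun b hbp hbU => hMU b (hbpos b hbp) hbU
        have hC2 : ∀ b ∈ r.neg, b ∈ U → b ∉ X :=
          fun b hbn _ hbX => hnegM b hbn (Or.inl hbX)
        have hmemT' : evalR r ∈ T' := ⟨r, ⟨hrT, hC1, hC2⟩, rfl⟩
        have hred : (⟨r.head, r.pos.filter (fun b => b ∉ U), ∅⟩ : LPRule) ∈ reduct T' Y := by
          rw [mem_reduct]
          refine ⟨evalR r, hmemT', ?_, rfl⟩
          intro b hbneg hbY
          exact hnegM b (Finset.mem_filter.mp hbneg).1 (Or.inr hbY)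
        have hbY : bodyTrue Y (⟨r.head, r.pos.filter (fun b => b ∉ U), ∅⟩ : LPRule) := by
          constructor
          · intro b hbp
            have h1 := Finset.mem_filter.mp hbp
            rcases hbpos b h1.1 with hX' | hY'
            · exact absurd (hXU hX') h1.2
            · exact hY'
          · simp
        have := hY.1 _ hred hbY
        rw [ha] at this ⊢
        exact Or.inr this
    · -- M is the least model of the reduct of P
      intro I hI
      have hXI : X ⊆ I := by
        apply lm_subset
        intro r hrB hb
        have hrr : r ∈ reduct P M := by
          rw [mem_reduct]
          exact ⟨r, hrB.1, by rw [hBpos r hrB]; simp, self_eq_mk (hBpos r hrB)⟩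
        exact hI r hrr hb
      have hYI : Y ⊆ I := by
        apply hY.2
        rintro r' hr' hb
        rw [mem_reduct] at hr'
        obtain ⟨e, he, hnegY, rfl⟩ := hr'
        obtain ⟨r, ⟨hrT, hC1, hC2⟩, rfl⟩ := he
        have hred : (⟨r.head, r.pos, ∅⟩ : LPRule) ∈ reduct P M := by
          rw [mem_reduct]
          refine ⟨r, hrT.1, ?_, rfl⟩
          intro b hbn hbM
          by_cases hbU : b ∈ U
          · exact hC2 b hbn hbU (hMU b hbM hbU)
          · have hbY' : b ∈ Y := by
              rcases hbM with h | h
              · exact absurd (hXU h) hbU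
              · exact h
            exact hnegY b (Finset.mem_filter.mpr ⟨hbn, hbU⟩) hbY'
        have hbI : bodyTrue I (⟨r.head, r.pos, ∅⟩ : LPRule) := by
          constructor
          · intro b hbp
            by_cases hbU : b ∈ U
            · exact hXI (hC1 b hbp hbU)
            · exact hb.1 b (Finset.mem_filter.mpr ⟨hbp, hbU⟩)
          · simp
        exact hI ⟨r.head, r.pos, ∅⟩ hred hbI
      rintro a (h | h)
      · exact hXI h
      · exact hYI h
end StratAux

/-- a stratified program without strong constraints has at least
one stable model. -/
theorem stratified_exists_stable (P : Set LPRule) (hFin : P.Finite)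
    (hStrat : LP.stratified P) (hCF : LP.constraintFree P) :
    ∃ M, LP.isStable P M := by
  exact StratAux.main_induction _ P hFin hStrat hCF le_rfl
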